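/- Let v₀ ∈ [5.1, 7.5] and set t₁ = (10v₀ − 25)/13, t₂ = (10v₀ + 1)/13, t₃ = (10v₀ + 153)/22, t₄ = 157/11. Then: (i) t₁ ≥ 2, t₂ − t₁ ≥ 2, t₃ − t₂ ≥ 2, t₄ − t₃ ≥ 2 and t₄ ≤ 20; (ii) for every t ∈ [0,20] and every real w lying in the consumption band C₁ at time t, 5.1 ≤ v₀ + V_in(t; t₁,t₂,t₃,t₄) − w ≤ 24.9; and (iii) for t = 20 and every w ∈ [13.2, 15.2], 5.3 ≤ v₀ + V_in(20; t₁,t₂,t₃,t₄) − w ≤ 7.3. -/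
import Mathlib


/-- Volume of oil pumped in by time `t` with two activations during `[t₁,t₂] ∪ [t₃,t₄]`
at rate 2.2 l/s. -/
noncomputable def Vin (t t₁ t₂ t₃ t₄ : ℝ) : ℝ :=
  2.2 * ((min t t₂ - min t t₁) + (min t t₄ - min t t₃))

/-- `w` lies in the consumption band `C₁` at time `t`. -/
def Cband (t w : ℝ) : Prop :=
  (0 ≤ t → t ≤ 2 → w = 0) ∧
  (2 ≤ t → t ≤ 4 → 1.1 * (t - 2) ≤ w ∧ w ≤ 1.3 * (t - 2)) ∧
  (4 ≤ t → t ≤ 8 → 2.2 ≤ w ∧ w ≤ 2.6) ∧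
  (8 ≤ t → t ≤ 10 → 2.2 + 1.1 * (t - 8) ≤ w ∧ w ≤ 2.6 + 1.3 * (t - 8)) ∧
  (10 ≤ t → t ≤ 12 → 4.4 + 2.4 * (t - 10) ≤ w ∧ w ≤ 5.2 + 2.6 * (t - 10)) ∧
  (12 ≤ t → t ≤ 14 → 9.2 ≤ w ∧ w ≤ 10.4) ∧
  (14 ≤ t → t ≤ 16 → 9.2 + 1.6 * (t - 14) ≤ w ∧ w ≤ 10.4 + 1.8 * (t - 14)) ∧
  (16 ≤ t → t ≤ 18 → 12.4 + 0.4 * (t - 16) ≤ w ∧ w ≤ 14 + 0.6 * (t - 16)) ∧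
  (18 ≤ t → t ≤ 20 → 13.2 ≤ w ∧ w ≤ 15.2)

set_option maxHeartbeats 1000000 in
theorem stmt_16 (v₀ : ℝ) (hv₀ : 5.1 ≤ v₀ ∧ v₀ ≤ 7.5)
    (t₁ t₂ t₃ t₄ : ℝ)
    (ht₁ : t₁ = (10 * v₀ - 25) / 13) (ht₂ : t₂ = (10 * v₀ + 1) / 13)
    (ht₃ : t₃ = (10 * v₀ + 153) / 22) (ht₄ : t₄ = 157 / 11) :
    -- (i) pump latency
    (t₁ ≥ 2 ∧ t₂ - t₁ ≥ 2 ∧ t₃ - t₂ ≥ 2 ∧ t₄ - t₃ ≥ 2 ∧ t₄ ≤ 20) ∧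
    -- (ii) local safety
    (∀ t : ℝ, 0 ≤ t → t ≤ 20 → ∀ w : ℝ, Cband t w →
      5.1 ≤ v₀ + Vin t t₁ t₂ t₃ t₄ - w ∧ v₀ + Vin t t₁ t₂ t₃ t₄ - w ≤ 24.9) ∧
    -- (iii) inductiveness at t = 20
    (∀ w : ℝ, 13.2 ≤ w → w ≤ 15.2 →
      5.3 ≤ v₀ + Vin 20 t₁ t₂ t₃ t₄ - w ∧ v₀ + Vin 20 t₁ t₂ t₃ t₄ - w ≤ 7.3) := by
  obtain ⟨hv1, hv2⟩ := hv₀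
  have e1 : 13 * t₁ = 10 * v₀ - 25 := by rw [ht₁]; ring
  have e2 : 13 * t₂ = 10 * v₀ + 1 := by rw [ht₂]; ring
  have e3 : 22 * t₃ = 10 * v₀ + 153 := by rw [ht₃]; ring
  have e4 : 11 * t₄ = 157 := by rw [ht₄]; ring
  refine ⟨⟨by linarith, by linarith, by linarith, by linarith, by linarith⟩, ?_, ?_⟩
  · intro t ht0 ht20 w hC
    obtain ⟨h1, h2, h3, h4, h5, h6, h7, h8, h9⟩ := hC
    simp only [Vin]
    rcases le_total t 2 with h | h
    · have hw := h1 ht0 h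
      rw [min_eq_left (by linarith : t ≤ t₁), min_eq_left (by linarith : t ≤ t₂),
          min_eq_left (by linarith : t ≤ t₃), min_eq_left (by linarith : t ≤ t₄)]
      constructor <;> linarith
    · rcases le_total t 4 with h' | h'
      · obtain ⟨hw1, hw2⟩ := h2 h h'
        rw [min_eq_left (by linarith : t ≤ t₂), min_eq_left (by linarith : t ≤ t₃),
            min_eq_left (by linarith : t ≤ t₄)]
        rcases min_cases t t₁ with ⟨f1, l1⟩ | ⟨f1, l1⟩ <;> rw [f1] <;>
          constructor <;> linarith
      · rcases le_total t 8 with h'' | h''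
        · obtain ⟨hw1, hw2⟩ := h3 h' h''
          rw [min_eq_right (by linarith : t₁ ≤ t), min_eq_left (by linarith : t ≤ t₃),
              min_eq_left (by linarith : t ≤ t₄)]
          rcases min_cases t t₂ with ⟨f2, l2⟩ | ⟨f2, l2⟩ <;> rw [f2] <;>
            constructor <;> linarith
        · rcases le_total t 10 with h3' | h3'
          · obtain ⟨hw1, hw2⟩ := h4 h'' h3'
            rw [min_eq_right (by linarith : t₁ ≤ t), min_eq_right (by linarith : t₂ ≤ t),
                min_eq_left (by linarith : t ≤ t₄)]
            rcases min_cases t t₃ with ⟨f3, l3⟩ | ⟨f3, l3⟩ <;> rw [f3] <;>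
              constructor <;> linarith
          · rcases le_total t 12 with h4' | h4'
            · obtain ⟨hw1, hw2⟩ := h5 h3' h4'
              rw [min_eq_right (by linarith : t₁ ≤ t), min_eq_right (by linarith : t₂ ≤ t),
                  min_eq_left (by linarith : t ≤ t₄)]
              rcases min_cases t t₃ with ⟨f3, l3⟩ | ⟨f3, l3⟩ <;> rw [f3] <;>
                constructor <;> linarith
            · rcases le_total t 14 with h5' | h5'
              · obtain ⟨hw1, hw2⟩ := h6 h4' h5'
                rw [min_eq_right (by linarith : t₁ ≤ t), min_eq_right (by linarith : t₂ ≤ t),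
                    min_eq_right (by linarith : t₃ ≤ t), min_eq_left (by linarith : t ≤ t₄)]
                constructor <;> linarith
              · rcases le_total t 16 with h6' | h6'
                · obtain ⟨hw1, hw2⟩ := h7 h5' h6'
                  rw [min_eq_right (by linarith : t₁ ≤ t), min_eq_right (by linarith : t₂ ≤ t),
                      min_eq_right (by linarith : t₃ ≤ t)]
                  rcases min_cases t t₄ with ⟨f4, l4⟩ | ⟨f4, l4⟩ <;> rw [f4] <;>
                    constructor <;> linarith
                · rcases le_total t 18 with h7' | h7'
                  · obtain ⟨hw1, hw2⟩ := h8 h6' h7'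
                    rw [min_eq_right (by linarith : t₁ ≤ t), min_eq_right (by linarith : t₂ ≤ t),
                        min_eq_right (by linarith : t₃ ≤ t), min_eq_right (by linarith : t₄ ≤ t)]
                    constructor <;> linarith
                  · obtain ⟨hw1, hw2⟩ := h9 h7' ht20
                    rw [min_eq_right (by linarith : t₁ ≤ t), min_eq_right (by linarith : t₂ ≤ t),
                        min_eq_right (by linarith : t₃ ≤ t), min_eq_right (by linarith : t₄ ≤ t)]
                    constructor <;> linarith
  · intro w hw1 hw2
    rw [Vin, min_eq_right (by linarith : t₁ ≤ (20:ℝ)), min_eq_right (by linarith : t₂ ≤ (20:ℝ)),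
        min_eq_right (by linarith : t₃ ≤ (20:ℝ)), min_eq_right (by linarith : t₄ ≤ (20:ℝ))]
    constructor <;> linarith
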